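/- Utility of the exponential mechanism: For the exponential mechanism over a finite set S with utility u of sensitivity Δ and privacy parameter ε, for any γ > 0, the probability that the output s satisfies u(X, s) ≤ Opt − γ is at most |S| · exp(−ε·γ/(2Δ)), where Opt = max_{s ∈ S} u(X, s). -/

import Mathlib

open Real Finset

/-- Probability that the exponential mechanism with utility `u`, sensitivity `Δ`
and privacy parameter `ε` outputs `s` on database `X`. -/
noncomputable def expMechProb {D S : Type*} [Fintype S]
    (u : Multiset D → S → ℝ) (Δ ε : ℝ) (X : Multiset D) (s : S) : ℝ :=
  Real.exp (ε * u X s / (2 * Δ)) / ∑ t, Real.exp (ε * u X t / (2 * Δ))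

/-- Utility of the exponential mechanism: the probability that the output `s` has
`u(X,s) ≤ Opt − γ` is at most `|S| · exp(−εγ/(2Δ))`, where `Opt = max_{s} u(X,s)`. -/
theorem expMech_utility {D S : Type*} [Fintype S] [Nonempty S]
    (u : Multiset D → S → ℝ) (Δ ε : ℝ) (hΔ : 0 < Δ) (hε : 0 ≤ ε)
    (X : Multiset D) (γ : ℝ) (hγ : 0 < γ) :
    ∑ s ∈ Finset.univ.filter
        (fun s => u X s ≤ (Finset.univ.sup' Finset.univ_nonempty (u X)) - γ),
      expMechProb u Δ ε X s
      ≤ (Fintype.card S : ℝ) * Real.exp (-(ε * γ) / (2 * Δ)) := by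
  set Opt := Finset.univ.sup' Finset.univ_nonempty (u X) with hOpt
  obtain ⟨s₀, -, hs₀⟩ := Finset.exists_mem_eq_sup' Finset.univ_nonempty (u X)
  have hZ : Real.exp (ε * Opt / (2 * Δ)) ≤ ∑ t, Real.exp (ε * u X t / (2 * Δ)) := by
    rw [hOpt, hs₀]
    exact Finset.single_le_sum (f := fun t => Real.exp (ε * u X t / (2 * Δ))) (fun t _ => (Real.exp_pos _).le) (Finset.mem_univ s₀)
  have hZpos : (0:ℝ) < ∑ t, Real.exp (ε * u X t / (2 * Δ)) :=
    lt_of_lt_of_le (Real.exp_pos _) hZ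
  have hterm : ∀ s ∈ Finset.univ.filter (fun s => u X s ≤ Opt - γ),
      expMechProb u Δ ε X s ≤ Real.exp (-(ε * γ) / (2 * Δ)) := by
    intro s hs
    rw [Finset.mem_filter] at hs
    have hnum : Real.exp (ε * u X s / (2 * Δ)) ≤
        Real.exp (-(ε * γ) / (2 * Δ)) * Real.exp (ε * Opt / (2 * Δ)) := by
      rw [← Real.exp_add, Real.exp_le_exp]
      have h2Δ : (0:ℝ) < 2 * Δ := by linarith
      rw [← add_div, div_le_div_iff_of_pos_right h2Δ]
      nlinarith [hs.2]
    unfold expMechProb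
    rw [div_le_iff₀ hZpos]
    calc Real.exp (ε * u X s / (2 * Δ))
        ≤ Real.exp (-(ε * γ) / (2 * Δ)) * Real.exp (ε * Opt / (2 * Δ)) := hnum
      _ ≤ Real.exp (-(ε * γ) / (2 * Δ)) * ∑ t, Real.exp (ε * u X t / (2 * Δ)) := by
          exact mul_le_mul_of_nonneg_left hZ (Real.exp_pos _).le
  calc ∑ s ∈ Finset.univ.filter (fun s => u X s ≤ Opt - γ), expMechProb u Δ ε X s
      ≤ ∑ _s ∈ Finset.univ.filter (fun s => u X s ≤ Opt - γ),
          Real.exp (-(ε * γ) / (2 * Δ)) := Finset.sum_le_sum hterm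
    _ = (Finset.univ.filter (fun s => u X s ≤ Opt - γ)).card *
          Real.exp (-(ε * γ) / (2 * Δ)) := by rw [Finset.sum_const, nsmul_eq_mul]
    _ ≤ (Fintype.card S : ℝ) * Real.exp (-(ε * γ) / (2 * Δ)) := by
        apply mul_le_mul_of_nonneg_right _ (Real.exp_pos _).le
        exact_mod_cast Finset.card_filter_le _ _
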